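/- arXiv:1509.04955 — 2 statements merged into one kernel-verified Lean document; each statement's English description precedes it below -/
import Mathlib

section
/- Let K be a positive integer, ε ∈ (0,1), and S, T ≥ 2 positive integers with T ≤ εS. For any function u ∈ 𝓕_S^K (a product of K functions in 𝓕_S), there is a function v ∈ 𝓕_T satisfying ‖v − u‖_∞ = O(Kε). -/
/-- The box [S]^k ⊆ ℤ^k. -/
noncomputable def sbox (k S : ℕ) : Finset (Fin k → ℤ) :=
  Fintype.piFinset fun _ => Finset.Icc (1 : ℤ) (S : ℤ)

/-- ψ(s₁,…,s_k) = k!(s₁ + ⋯ + s_k). -/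
def psiK (k : ℕ) (s : Fin k → ℤ) : ℤ := (Nat.factorial k : ℤ) * ∑ i, s i

/-- The basic functions of 𝓕_S: u(n) = E_{s∈[S]^k} ∏ᵢ uᵢ(n − ψ(s), s) with
uᵢ : G^{k+1} → [−1,1] not depending on sᵢ. -/
def FSbasic (N : ℕ) [NeZero N] (k S : ℕ) : Set (ZMod N → ℝ) :=
  {u | ∃ w : Fin k → ZMod N → (Fin k → ZMod N) → ℝ,
    (∀ i n s, |w i n s| ≤ 1) ∧
    (∀ i n s s', (∀ j, j ≠ i → s j = s' j) → w i n s = w i n s') ∧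
    (∀ n, u n = (∑ s ∈ sbox k S,
        ∏ i, w i (n - ((psiK k s : ℤ) : ZMod N)) fun j => ((s j : ℤ) : ZMod N))
      / (S : ℝ) ^ k)}

/-- 𝓕_S: all convex combinations of basic functions. -/
def FSset (N : ℕ) [NeZero N] (k S : ℕ) : Set (ZMod N → ℝ) :=
  convexHull ℝ (FSbasic N k S)

open Finset
set_option maxHeartbeats 1000000

lemma aux_abs_prod_le_one {ι : Type*} (t : Finset ι) (f : ι → ℝ) (h : ∀ i ∈ t, |f i| ≤ 1) :
    |∏ i ∈ t, f i| ≤ 1 := by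
  rw [Finset.abs_prod]
  exact Finset.prod_le_one (fun i _ => abs_nonneg _) h

lemma aux_abs_sum_le_card {ι : Type*} (t : Finset ι) (f : ι → ℝ) (h : ∀ i ∈ t, |f i| ≤ 1) :
    |∑ i ∈ t, f i| ≤ t.card := by
  calc |∑ i ∈ t, f i| ≤ ∑ i ∈ t, |f i| := Finset.abs_sum_le_sum_abs _ _
  _ ≤ ∑ _i ∈ t, (1:ℝ) := Finset.sum_le_sum h
  _ = t.card := by simp

lemma aux_abs_prod_sub_prod {ι : Type*} (t : Finset ι) (f g : ι → ℝ)
    (hf : ∀ i ∈ t, |f i| ≤ 1) (hg : ∀ i ∈ t, |g i| ≤ 1) :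
    |∏ i ∈ t, f i - ∏ i ∈ t, g i| ≤ ∑ i ∈ t, |f i - g i| := by
  classical
  induction t using Finset.cons_induction with
  | empty => simp
  | cons a t ha ih =>
    rw [Finset.prod_cons, Finset.prod_cons, Finset.sum_cons]
    have h1 : f a * ∏ i ∈ t, f i - g a * ∏ i ∈ t, g i
        = f a * (∏ i ∈ t, f i - ∏ i ∈ t, g i) + (f a - g a) * ∏ i ∈ t, g i := by ring
    have hfa : |f a| ≤ 1 := hf a (Finset.mem_cons_self a t)
    have hga : |∏ i ∈ t, g i| ≤ 1 :=
      aux_abs_prod_le_one t g (fun i hi => hg i (Finset.mem_cons_of_mem hi))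
    have ih' := ih (fun i hi => hf i (Finset.mem_cons_of_mem hi))
      (fun i hi => hg i (Finset.mem_cons_of_mem hi))
    calc |f a * ∏ i ∈ t, f i - g a * ∏ i ∈ t, g i|
        = |f a * (∏ i ∈ t, f i - ∏ i ∈ t, g i) + (f a - g a) * ∏ i ∈ t, g i| := by rw [h1]
      _ ≤ |f a * (∏ i ∈ t, f i - ∏ i ∈ t, g i)| + |(f a - g a) * ∏ i ∈ t, g i| := abs_add_le _ _
      _ = |f a| * |∏ i ∈ t, f i - ∏ i ∈ t, g i| + |f a - g a| * |∏ i ∈ t, g i| := by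
          rw [abs_mul, abs_mul]
      _ ≤ 1 * (∑ i ∈ t, |f i - g i|) + |f a - g a| * 1 := by
          have h2 : |f a| * |∏ i ∈ t, f i - ∏ i ∈ t, g i| ≤ 1 * (∑ i ∈ t, |f i - g i|) :=
            mul_le_mul hfa ih' (abs_nonneg _) zero_le_one
          have h3 : |f a - g a| * |∏ i ∈ t, g i| ≤ |f a - g a| * 1 :=
            mul_le_mul_of_nonneg_left hga (abs_nonneg _)
          linarith
      _ = |f a - g a| + ∑ i ∈ t, |f i - g i| := by ring

lemma card_sbox (k S : ℕ) : (sbox k S).card = S ^ k := by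
  simp [sbox, Fintype.card_piFinset, Int.card_Icc]

lemma aux_shift_sum (k S T : ℕ) (hT : 1 ≤ T) (hTS : T ≤ S) (h : (Fin k → ℤ) → ℝ)
    (hb : ∀ s, |h s| ≤ 1) (t : Fin k → ℤ) (ht : t ∈ sbox k T) :
    |(∑ s ∈ sbox k S, h (s + t)) - ∑ s ∈ sbox k S, h s|
      ≤ 2 * ((S : ℝ) ^ k - ((S : ℝ) - (T : ℝ)) ^ k) := by
  classical
  have htmem : ∀ i, 1 ≤ t i ∧ t i ≤ (T : ℤ) := by
    intro i
    have := (Fintype.mem_piFinset.1 ht) i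
    exact Finset.mem_Icc.1 this
  set B : Finset (Fin k → ℤ) := sbox k S with hB
  set D : Finset (Fin k → ℤ) := Fintype.piFinset (fun i => Finset.Icc (1 + t i) ((S : ℤ) + t i)) with hD
  -- step 1 : shift of sum
  have step1 : ∑ s ∈ B, h (s + t) = ∑ s ∈ D, h s := by
    apply Finset.sum_nbij' (i := fun s => s + t) (j := fun s => s - t)
    · intro a haB
      rw [hB, sbox, Fintype.mem_piFinset] at haB
      rw [hD, Fintype.mem_piFinset]
      intro i
      have := Finset.mem_Icc.1 (haB i)
      exact Finset.mem_Icc.2 ⟨by simpa using add_le_add_right this.1 (t i),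
        by simpa using add_le_add_right this.2 (t i)⟩
    · intro a haD
      rw [hD, Fintype.mem_piFinset] at haD
      rw [hB, sbox, Fintype.mem_piFinset]
      intro i
      have := Finset.mem_Icc.1 (haD i)
      refine Finset.mem_Icc.2 ⟨?_, ?_⟩
      · have := this.1; simp only [Pi.sub_apply]; omega
      · have := this.2; simp only [Pi.sub_apply]; omega
    · intro a _; simp
    · intro a _; simp
    · intro a _; rfl
  have cardD : D.card = S ^ k := by
    rw [hD, Fintype.card_piFinset]
    have : ∀ i : Fin k, (Finset.Icc (1 + t i) ((S : ℤ) + t i)).card = S := by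
      intro i; rw [Int.card_Icc]; omega
    simp [this]
  have cardB : B.card = S ^ k := card_sbox k S
  -- the small box inside the intersection
  set I : Finset (Fin k → ℤ) := Fintype.piFinset (fun i => Finset.Icc (1 + t i) (S : ℤ)) with hI
  have hIsub : I ⊆ D ∩ B := by
    intro a haI
    rw [Fintype.mem_piFinset] at haI
    rw [Finset.mem_inter]
    constructor
    · rw [Fintype.mem_piFinset]
      intro i
      have := Finset.mem_Icc.1 (haI i)
      have ht1 := (htmem i).1
      exact Finset.mem_Icc.2 ⟨this.1, by omega⟩
    · rw [hB, sbox, Fintype.mem_piFinset]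
      intro i
      have := Finset.mem_Icc.1 (haI i)
      have ht1 := (htmem i).1
      exact Finset.mem_Icc.2 ⟨by omega, this.2⟩
  have cardI : (S - T) ^ k ≤ I.card := by
    rw [hI, Fintype.card_piFinset]
    calc (S - T) ^ k = ∏ _i : Fin k, (S - T) := by simp
    _ ≤ ∏ i : Fin k, (Finset.Icc (1 + t i) (S : ℤ)).card := by
        apply Finset.prod_le_prod'
        intro i _
        rw [Int.card_Icc]
        have h1 := (htmem i).1
        have h2 := (htmem i).2
        omega
  have cardInter : (S - T) ^ k ≤ (D ∩ B).card := le_trans cardI (Finset.card_le_card hIsub)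
  have cardDB : (D \ B).card ≤ S ^ k - (S - T) ^ k := by
    have := Finset.card_inter_add_card_sdiff D B
    omega
  have cardBD : (B \ D).card ≤ S ^ k - (S - T) ^ k := by
    have := Finset.card_inter_add_card_sdiff B D
    have : (B ∩ D).card = (D ∩ B).card := by rw [Finset.inter_comm]
    have := Finset.card_inter_add_card_sdiff B D
    rw [Finset.inter_comm] at this
    omega
  -- sum decomposition
  have decompD : ∑ s ∈ D ∩ B, h s + ∑ s ∈ D \ B, h s = ∑ s ∈ D, h s := by
    rw [add_comm]
    have := Finset.sum_sdiff (f := h) (Finset.inter_subset_left (s₁ := D) (s₂ := B))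
    rwa [Finset.sdiff_inter_self_left] at this
  have decompB : ∑ s ∈ D ∩ B, h s + ∑ s ∈ B \ D, h s = ∑ s ∈ B, h s := by
    rw [add_comm]
    have := Finset.sum_sdiff (f := h) (Finset.inter_subset_left (s₁ := B) (s₂ := D))
    rw [Finset.sdiff_inter_self_left] at this
    rw [Finset.inter_comm] at this
    exact this
  have diffeq : (∑ s ∈ D, h s) - ∑ s ∈ B, h s = (∑ s ∈ D \ B, h s) - ∑ s ∈ B \ D, h s := by
    rw [← decompD, ← decompB]; ring
  have habs1 : |∑ s ∈ D \ B, h s| ≤ ((D \ B).card : ℝ) :=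
    aux_abs_sum_le_card _ _ (fun s _ => hb s)
  have habs2 : |∑ s ∈ B \ D, h s| ≤ ((B \ D).card : ℝ) :=
    aux_abs_sum_le_card _ _ (fun s _ => hb s)
  have hcast : ((S ^ k - (S - T) ^ k : ℕ) : ℝ) = (S : ℝ) ^ k - ((S : ℝ) - (T : ℝ)) ^ k := by
    have hle : (S - T) ^ k ≤ S ^ k := Nat.pow_le_pow_left (Nat.sub_le S T) k
    rw [Nat.cast_sub hle]
    push_cast [Nat.cast_sub hTS]
    ring
  rw [step1, diffeq]
  calc |(∑ s ∈ D \ B, h s) - ∑ s ∈ B \ D, h s|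
      ≤ |∑ s ∈ D \ B, h s| + |∑ s ∈ B \ D, h s| := abs_sub _ _
    _ ≤ ((D \ B).card : ℝ) + ((B \ D).card : ℝ) := add_le_add habs1 habs2
    _ ≤ ((S ^ k - (S - T) ^ k : ℕ) : ℝ) + ((S ^ k - (S - T) ^ k : ℕ) : ℝ) := by
        have c1 : ((D \ B).card : ℝ) ≤ ((S ^ k - (S - T) ^ k : ℕ) : ℝ) := Nat.cast_le.2 cardDB
        have c2 : ((B \ D).card : ℝ) ≤ ((S ^ k - (S - T) ^ k : ℕ) : ℝ) := Nat.cast_le.2 cardBD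
        linarith
    _ = 2 * ((S : ℝ) ^ k - ((S : ℝ) - (T : ℝ)) ^ k) := by rw [hcast]; ring

lemma psiK_add (k : ℕ) (s t : Fin k → ℤ) : psiK k (s + t) = psiK k s + psiK k t := by
  simp [psiK, Pi.add_apply, Finset.sum_add_distrib, mul_add]

noncomputable def Wfun (N : ℕ) [NeZero N] (k K : ℕ)
    (w : Fin K → Fin k → ZMod N → (Fin k → ZMod N) → ℝ)
    (σ : Fin K → Fin k → ℤ) (i : Fin k) (m : ZMod N) (τ : Fin k → ZMod N) : ℝ :=
  ∏ j, w j i (m - ((psiK k (σ j) : ℤ) : ZMod N)) (fun l => ((σ j l : ℤ) : ZMod N) + τ l)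

noncomputable def bfun (N : ℕ) [NeZero N] (k K T : ℕ)
    (w : Fin K → Fin k → ZMod N → (Fin k → ZMod N) → ℝ)
    (σ : Fin K → Fin k → ℤ) : ZMod N → ℝ := fun n =>
  (∑ t ∈ sbox k T, ∏ i, Wfun N k K w σ i (n - ((psiK k t : ℤ) : ZMod N))
      (fun j => ((t j : ℤ) : ZMod N))) / (T : ℝ) ^ k

lemma lemA (k : ℕ) (N : ℕ) [NeZero N] (K : ℕ) (ε : ℝ) (hε : 0 < ε) (hε1 : ε < 1)
    (S T : ℕ) (hS : 2 ≤ S) (hT : 2 ≤ T) (hTε : (T : ℝ) ≤ ε * S)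
    (b : Fin K → ZMod N → ℝ) (hb : ∀ j, b j ∈ FSbasic N k S) :
    ∃ v ∈ FSset N k T, ∀ n, |v n - ∏ j, b j n| ≤ 2 * k * K * ε := by
  classical
  have hSpos : 0 < S := by omega
  have hTpos : 0 < T := by omega
  have hS0 : (0:ℝ) < S := by exact_mod_cast hSpos
  have hT0R : (0:ℝ) < T := by exact_mod_cast hTpos
  have hTSR : (T:ℝ) < S := lt_of_le_of_lt hTε (by nlinarith)
  have hTS : T ≤ S := by exact_mod_cast le_of_lt hTSR
  choose w hw1 hw2 hw3 using hb
  have hSk0 : (0:ℝ) < (S:ℝ)^k := pow_pos hS0 k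
  have hTk0 : (0:ℝ) < (T:ℝ)^k := pow_pos hT0R k
  set P : Finset (Fin K → Fin k → ℤ) := Fintype.piFinset (fun _ => sbox k S) with hP
  have hbasic : ∀ σ : Fin K → Fin k → ℤ, bfun N k K T w σ ∈ FSbasic N k T := by
    intro σ
    refine ⟨Wfun N k K w σ, ?_, ?_, fun n => rfl⟩
    · intro i m τ
      exact aux_abs_prod_le_one univ _ (fun j _ => hw1 j i _ _)
    · intro i m τ τ' hττ'
      exact Finset.prod_congr rfl (fun j _ => hw2 j i _ _ _ (fun l hl => by rw [hττ' l hl]))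
  set wt : ℝ := (((S:ℝ)^k) ^ K)⁻¹ with hwtdef
  have hwt0 : 0 ≤ wt := by positivity
  have hcardP : P.card = (S ^ k) ^ K := by
    rw [hP, Fintype.card_piFinset]; simp [card_sbox]
  have hsumwt : ∑ _σ ∈ P, wt = 1 := by
    rw [Finset.sum_const, hcardP, nsmul_eq_mul, hwtdef]
    push_cast
    exact mul_inv_cancel₀ (by positivity)
  set v : ZMod N → ℝ := ∑ σ ∈ P, wt • bfun N k K T w σ with hvdef
  have hvmem : v ∈ FSset N k T := by
    rw [hvdef]
    exact (convex_convexHull ℝ _).sum_mem (fun σ _ => hwt0) hsumwt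
      (fun σ _ => subset_convexHull ℝ _ (hbasic σ))
  refine ⟨v, hvmem, ?_⟩
  intro n
  set Gn : Fin K → (Fin k → ℤ) → ℝ := fun j t =>
    ∑ s ∈ sbox k S, ∏ i, w j i (n - ((psiK k t : ℤ) : ZMod N) - ((psiK k s : ℤ) : ZMod N))
      (fun l => ((s l : ℤ) : ZMod N) + ((t l : ℤ) : ZMod N)) with hGndef
  set Fn : Fin K → ℝ := fun j =>
    ∑ s ∈ sbox k S, ∏ i, w j i (n - ((psiK k s : ℤ) : ZMod N))
      (fun l => ((s l : ℤ) : ZMod N)) with hFndef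
  set G : Fin K → (Fin k → ℤ) → ℝ := fun j t => Gn j t / (S:ℝ)^k with hGdef
  have hFb : ∀ j, b j n = Fn j / (S:ℝ)^k := by
    intro j
    rw [hw3 j n, hFndef]
  -- Step A : v n = (∑ t, ∏ j, G j t) / T^k
  have e1 : ∀ t : Fin k → ℤ, (∑ σ ∈ P, ∏ i, Wfun N k K w σ i
      (n - ((psiK k t : ℤ) : ZMod N)) (fun j => ((t j : ℤ) : ZMod N))) = ∏ j, Gn j t := by
    intro t
    have swap : ∀ σ : Fin K → Fin k → ℤ,
        (∏ i, Wfun N k K w σ i (n - ((psiK k t : ℤ) : ZMod N)) (fun j => ((t j : ℤ) : ZMod N)))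
        = ∏ j, ∏ i, w j i (n - ((psiK k t : ℤ) : ZMod N) - ((psiK k (σ j) : ℤ) : ZMod N))
            (fun l => ((σ j l : ℤ) : ZMod N) + ((t l : ℤ) : ZMod N)) := by
      intro σ
      rw [show (∏ i, Wfun N k K w σ i (n - ((psiK k t : ℤ) : ZMod N))
          (fun j => ((t j : ℤ) : ZMod N)))
          = ∏ i, ∏ j, w j i (n - ((psiK k t : ℤ) : ZMod N) - ((psiK k (σ j) : ℤ) : ZMod N))
            (fun l => ((σ j l : ℤ) : ZMod N) + ((t l : ℤ) : ZMod N)) from rfl]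
      exact Finset.prod_comm
    calc (∑ σ ∈ P, ∏ i, Wfun N k K w σ i (n - ((psiK k t : ℤ) : ZMod N))
            (fun j => ((t j : ℤ) : ZMod N)))
        = ∑ σ ∈ P, ∏ j, ∏ i, w j i (n - ((psiK k t : ℤ) : ZMod N) - ((psiK k (σ j) : ℤ) : ZMod N))
            (fun l => ((σ j l : ℤ) : ZMod N) + ((t l : ℤ) : ZMod N)) :=
          Finset.sum_congr rfl (fun σ _ => swap σ)
      _ = ∏ j, ∑ s ∈ sbox k S, ∏ i, w j i
            (n - ((psiK k t : ℤ) : ZMod N) - ((psiK k s : ℤ) : ZMod N))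
            (fun l => ((s l : ℤ) : ZMod N) + ((t l : ℤ) : ZMod N)) := by
          rw [hP]
          exact Finset.sum_prod_piFinset (sbox k S)
            (fun j s => ∏ i, w j i (n - ((psiK k t : ℤ) : ZMod N) - ((psiK k s : ℤ) : ZMod N))
              (fun l => ((s l : ℤ) : ZMod N) + ((t l : ℤ) : ZMod N)))
      _ = ∏ j, Gn j t := rfl
  have vn : v n = (∑ t ∈ sbox k T, ∏ j, G j t) / (T:ℝ)^k := by
    have hGwt : ∀ t, ∏ j, G j t = wt * ∏ j, Gn j t := by
      intro t
      rw [show (∏ j, G j t) = ∏ j, (Gn j t / (S:ℝ)^k) from rfl,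
        Finset.prod_div_distrib, Finset.prod_const, div_eq_mul_inv, mul_comm, hwtdef]
      simp
    calc v n = ∑ σ ∈ P, wt * bfun N k K T w σ n := by
          rw [hvdef]; simp [Finset.sum_apply, smul_eq_mul]
      _ = wt * ((∑ t ∈ sbox k T, ∑ σ ∈ P, ∏ i, Wfun N k K w σ i
            (n - ((psiK k t : ℤ) : ZMod N)) (fun j => ((t j : ℤ) : ZMod N))) / (T:ℝ)^k) := by
          rw [← Finset.mul_sum]
          congr 1
          simp only [bfun]
          rw [← Finset.sum_div]
          congr 1
          exact Finset.sum_comm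
      _ = wt * ((∑ t ∈ sbox k T, ∏ j, Gn j t) / (T:ℝ)^k) := by
          rw [Finset.sum_congr rfl (fun t _ => e1 t)]
      _ = (∑ t ∈ sbox k T, ∏ j, G j t) / (T:ℝ)^k := by
          rw [← mul_div_assoc, Finset.mul_sum]
          congr 1
          exact Finset.sum_congr rfl (fun t _ => (hGwt t).symm)
  -- bounds
  have habs1 : ∀ j t, |Gn j t| ≤ (S:ℝ)^k := by
    intro j t
    have := aux_abs_sum_le_card (sbox k S)
      (fun s => ∏ i, w j i (n - ((psiK k t : ℤ) : ZMod N) - ((psiK k s : ℤ) : ZMod N))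
        (fun l => ((s l : ℤ) : ZMod N) + ((t l : ℤ) : ZMod N)))
      (fun s _ => aux_abs_prod_le_one univ _ (fun i _ => hw1 j i _ _))
    rw [card_sbox] at this
    calc |Gn j t| ≤ ((S ^ k : ℕ) : ℝ) := this
    _ = (S:ℝ)^k := by push_cast; ring
  have habs2 : ∀ j, |Fn j| ≤ (S:ℝ)^k := by
    intro j
    have := aux_abs_sum_le_card (sbox k S)
      (fun s => ∏ i, w j i (n - ((psiK k s : ℤ) : ZMod N)) (fun l => ((s l : ℤ) : ZMod N)))
      (fun s _ => aux_abs_prod_le_one univ _ (fun i _ => hw1 j i _ _))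
    rw [card_sbox] at this
    calc |Fn j| ≤ ((S ^ k : ℕ) : ℝ) := this
    _ = (S:ℝ)^k := by push_cast; ring
  have hGb : ∀ j t, |G j t| ≤ 1 := by
    intro j t
    rw [hGdef]
    simp only [abs_div, abs_of_pos hSk0]
    exact div_le_one_of_le₀ (habs1 j t) hSk0.le
  have hbb : ∀ j, |b j n| ≤ 1 := by
    intro j
    rw [hFb j]
    simp only [abs_div, abs_of_pos hSk0]
    exact div_le_one_of_le₀ (habs2 j) hSk0.le
  -- Step C : per-factor error
  have stepC : ∀ t ∈ sbox k T, ∀ j : Fin K, |G j t - b j n| ≤ 2 * k * ε := by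
    intro t ht j
    have hshift : Gn j t = ∑ s ∈ sbox k S,
        (fun s => ∏ i, w j i (n - ((psiK k s : ℤ) : ZMod N)) (fun l => ((s l : ℤ) : ZMod N))) (s + t) := by
      rw [hGndef]
      refine Finset.sum_congr rfl (fun s _ => ?_)
      have e2 : n - ((psiK k t : ℤ) : ZMod N) - ((psiK k s : ℤ) : ZMod N)
          = n - ((psiK k (s + t) : ℤ) : ZMod N) := by
        rw [psiK_add]
        push_cast
        ring
      have e3 : (fun l => ((s l : ℤ) : ZMod N) + ((t l : ℤ) : ZMod N))
          = fun l => (((s + t) l : ℤ) : ZMod N) := by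
        funext l
        simp [Pi.add_apply]
      rw [e2, e3]
    have hdiff : |Gn j t - Fn j| ≤ 2 * ((S : ℝ) ^ k - ((S : ℝ) - (T : ℝ)) ^ k) := by
      rw [hshift, hFndef]
      exact aux_shift_sum k S T (by omega) hTS
        (fun s => ∏ i, w j i (n - ((psiK k s : ℤ) : ZMod N)) (fun l => ((s l : ℤ) : ZMod N)))
        (fun s => aux_abs_prod_le_one univ _ (fun i _ => hw1 j i _ _)) t ht
    have key : (S:ℝ)^k - ((S:ℝ) - (T:ℝ))^k ≤ k * ε * (S:ℝ)^k := by
      set x : ℝ := (T:ℝ)/(S:ℝ) with hxdef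
      have hx0 : 0 ≤ x := by positivity
      have hxε : x ≤ ε := (div_le_iff₀ hS0).2 (by linarith)
      have hST : (S:ℝ) - T = (S:ℝ) * (1 - x) := by
        rw [hxdef]; field_simp
      have hBern : 1 - (k:ℝ)*x ≤ (1-x)^k := by
        have := one_add_mul_le_pow (a := -x) (by linarith) k
        calc 1 - (k:ℝ)*x = 1 + (k:ℝ)*(-x) := by ring
        _ ≤ (1 + -x)^k := this
        _ = (1-x)^k := by ring_nf
      calc (S:ℝ)^k - ((S:ℝ) - T)^k = (S:ℝ)^k - (S:ℝ)^k * (1-x)^k := by rw [hST, mul_pow]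
      _ ≤ (S:ℝ)^k - (S:ℝ)^k * (1 - k*x) := by
          have := mul_le_mul_of_nonneg_left hBern hSk0.le
          linarith
      _ = (S:ℝ)^k * ((k:ℝ)*x) := by ring
      _ ≤ (S:ℝ)^k * ((k:ℝ)*ε) := by
          have : (k:ℝ)*x ≤ (k:ℝ)*ε := mul_le_mul_of_nonneg_left hxε (by positivity)
          exact mul_le_mul_of_nonneg_left this hSk0.le
      _ = k * ε * (S:ℝ)^k := by ring
    rw [hFb j, hGdef]
    rw [div_sub_div_same, abs_div, abs_of_pos hSk0, div_le_iff₀ hSk0]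
    calc |Gn j t - Fn j| ≤ 2 * ((S : ℝ) ^ k - ((S : ℝ) - (T : ℝ)) ^ k) := hdiff
    _ ≤ 2 * (k * ε * (S:ℝ)^k) := by linarith
    _ = 2 * k * ε * (S:ℝ)^k := by ring
  -- Step D : assemble
  have main : ∀ t ∈ sbox k T, |(∏ j, G j t) - ∏ j, b j n| ≤ (K:ℝ) * (2*k*ε) := by
    intro t ht
    calc |(∏ j, G j t) - ∏ j, b j n| ≤ ∑ j, |G j t - b j n| :=
        aux_abs_prod_sub_prod univ _ _ (fun j _ => hGb j t) (fun j _ => hbb j)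
    _ ≤ ∑ _j : Fin K, 2*(k:ℝ)*ε := Finset.sum_le_sum (fun j _ => stepC t ht j)
    _ = (K:ℝ) * (2*k*ε) := by
        rw [Finset.sum_const, Finset.card_univ, Fintype.card_fin, nsmul_eq_mul]
  have e4 : v n - ∏ j, b j n
      = (∑ t ∈ sbox k T, ((∏ j, G j t) - ∏ j, b j n)) / (T:ℝ)^k := by
    rw [vn, Finset.sum_sub_distrib, Finset.sum_const, card_sbox, sub_div]
    congr 1
    rw [nsmul_eq_mul]
    push_cast
    field_simp
  rw [e4, abs_div, abs_of_pos hTk0, div_le_iff₀ hTk0]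
  calc |∑ t ∈ sbox k T, ((∏ j, G j t) - ∏ j, b j n)|
      ≤ ∑ t ∈ sbox k T, |(∏ j, G j t) - ∏ j, b j n| := Finset.abs_sum_le_sum_abs _ _
    _ ≤ ∑ _t ∈ sbox k T, (K:ℝ) * (2*k*ε) := Finset.sum_le_sum main
    _ = ((T ^ k : ℕ) : ℝ) * ((K:ℝ) * (2*k*ε)) := by
        rw [Finset.sum_const, card_sbox, nsmul_eq_mul]
    _ = 2 * k * K * ε * (T:ℝ)^k := by push_cast; ring

lemma Dc_convex (N : ℕ) [NeZero N] (k T : ℕ) (c : ℝ) :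
    Convex ℝ {u : ZMod N → ℝ | ∃ v ∈ FSset N k T, ∀ n, |v n - u n| ≤ c} := by
  intro u₁ hu₁ u₂ hu₂ a b ha hb hab
  obtain ⟨v₁, hv₁, h₁⟩ := hu₁
  obtain ⟨v₂, hv₂, h₂⟩ := hu₂
  refine ⟨a • v₁ + b • v₂, (convex_convexHull ℝ _) hv₁ hv₂ ha hb hab, fun n => ?_⟩
  have e : (a • v₁ + b • v₂) n - (a • u₁ + b • u₂) n
      = a * (v₁ n - u₁ n) + b * (v₂ n - u₂ n) := by
    simp only [Pi.add_apply, Pi.smul_apply, smul_eq_mul]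
    ring
  rw [e]
  calc |a * (v₁ n - u₁ n) + b * (v₂ n - u₂ n)|
      ≤ |a * (v₁ n - u₁ n)| + |b * (v₂ n - u₂ n)| := abs_add_le _ _
    _ = a * |v₁ n - u₁ n| + b * |v₂ n - u₂ n| := by
        rw [abs_mul, abs_mul, abs_of_nonneg ha, abs_of_nonneg hb]
    _ ≤ a * c + b * c :=
        add_le_add (mul_le_mul_of_nonneg_left (h₁ n) ha) (mul_le_mul_of_nonneg_left (h₂ n) hb)
    _ = c := by rw [← add_mul, hab, one_mul]

lemma upgrade (N : ℕ) [NeZero N] (k S T K : ℕ) (c : ℝ)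
    (base : ∀ b : Fin K → ZMod N → ℝ, (∀ j, b j ∈ FSbasic N k S) →
      (fun n => ∏ j, b j n) ∈ {u : ZMod N → ℝ | ∃ v ∈ FSset N k T, ∀ n, |v n - u n| ≤ c}) :
    ∀ m : ℕ, ∀ g : Fin K → ZMod N → ℝ,
      (∀ j : Fin K, (j : ℕ) < m → g j ∈ FSset N k S) →
      (∀ j : Fin K, m ≤ (j : ℕ) → g j ∈ FSbasic N k S) →
      (fun n => ∏ j, g j n) ∈ {u : ZMod N → ℝ | ∃ v ∈ FSset N k T, ∀ n, |v n - u n| ≤ c} := by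
  classical
  intro m
  induction m with
  | zero => exact fun g h1 h2 => base g (fun j => h2 j (Nat.zero_le _))
  | succ m ih =>
    intro g h1 h2
    by_cases hmK : m < K
    · set m' : Fin K := ⟨m, hmK⟩ with hm'
      set L : (ZMod N → ℝ) →ₗ[ℝ] (ZMod N → ℝ) :=
        { toFun := fun x => fun nn => (∏ j ∈ Finset.univ.erase m', g j nn) * x nn
          map_add' := by intro x y; funext nn; simp only [Pi.add_apply]; ring
          map_smul' := by
            intro r x; funext nn
            simp only [Pi.smul_apply, smul_eq_mul, RingHom.id_apply]
            ring } with hLdef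
      have hLval : ∀ x : ZMod N → ℝ,
          L x = fun nn => (∏ j ∈ Finset.univ.erase m', g j nn) * x nn := fun x => rfl
      have himg : L '' FSbasic N k S ⊆
          {u : ZMod N → ℝ | ∃ v ∈ FSset N k T, ∀ n, |v n - u n| ≤ c} := by
        rintro _ ⟨x, hx, rfl⟩
        have hne1 : ∀ j : Fin K, (j : ℕ) < m → j ≠ m' := by
          intro j hj hEq
          rw [hEq] at hj
          simp [hm'] at hj
        have happ := ih (Function.update g m' x)
          (fun j hj => by
            rw [Function.update_of_ne (hne1 j hj)]
            exact h1 j (Nat.lt_succ_of_lt hj))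
          (fun j hj => by
            by_cases hjm : j = m'
            · rw [hjm, Function.update_self]; exact hx
            · rw [Function.update_of_ne hjm]
              refine h2 j ?_
              have : (j : ℕ) ≠ m := fun hEq => hjm (Fin.ext hEq)
              omega)
        have hupd : (fun nn => ∏ j, Function.update g m' x j nn) = L x := by
          funext nn
          rw [hLval x,
            ← Finset.mul_prod_erase Finset.univ (fun j => Function.update g m' x j nn)
              (Finset.mem_univ m'), Function.update_self]
          have : ∏ j ∈ Finset.univ.erase m', Function.update g m' x j nn
              = ∏ j ∈ Finset.univ.erase m', g j nn :=
            Finset.prod_congr rfl (fun j hj => by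
              rw [Function.update_of_ne (Finset.ne_of_mem_erase hj)])
          rw [this, mul_comm]
        rwa [hupd] at happ
      have h1m : g m' ∈ convexHull ℝ (FSbasic N k S) := h1 m' (by simp [hm'])
      have hmem : L (g m') ∈ {u : ZMod N → ℝ | ∃ v ∈ FSset N k T, ∀ n, |v n - u n| ≤ c} := by
        have himage : L (g m') ∈ L '' convexHull ℝ (FSbasic N k S) :=
          Set.mem_image_of_mem _ h1m
        rw [L.image_convexHull] at himage
        exact convexHull_min himg (Dc_convex N k T c) himage
      have hfinal : L (g m') = fun nn => ∏ j, g j nn := by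
        funext nn
        rw [hLval]
        show (∏ j ∈ Finset.univ.erase m', g j nn) * g m' nn = ∏ j, g j nn
        rw [mul_comm]
        exact Finset.mul_prod_erase Finset.univ (fun j => g j nn) (Finset.mem_univ m')
      rwa [hfinal] at hmem
    · exact ih g (fun j hj => h1 j (by omega)) (fun j hj => absurd j.isLt (by omega))


/-- 𝓕_S is almost closed under products: for T ≤ εS, any product of K functions of
𝓕_S is within O(Kε) in sup norm of a function of 𝓕_T. -/
theorem stmt15 (k : ℕ) (hk : 2 ≤ k) :
    ∃ C : ℝ, 0 < C ∧ ∀ (N : ℕ) [NeZero N], ∀ K : ℕ, 0 < K → ∀ ε : ℝ, 0 < ε → ε < 1 →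
    ∀ S T : ℕ, 2 ≤ S → 2 ≤ T → (T : ℝ) ≤ ε * S →
    ∀ u : ZMod N → ℝ,
      (∃ g : Fin K → (ZMod N → ℝ), (∀ j, g j ∈ FSset N k S) ∧ u = fun n => ∏ j, g j n) →
    ∃ v ∈ FSset N k T, ∀ n, |v n - u n| ≤ C * K * ε := by
  have hk0 : (0:ℝ) < (k:ℝ) := by exact_mod_cast (by omega : 0 < k)
  refine ⟨2 * k, by linarith, ?_⟩
  intro N _ K hK ε hε hε1 S T hS hT hTε u hu
  obtain ⟨g, hg, huv⟩ := hu
  have base : ∀ b : Fin K → ZMod N → ℝ, (∀ j, b j ∈ FSbasic N k S) →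
      (fun n => ∏ j, b j n) ∈
        {u : ZMod N → ℝ | ∃ v ∈ FSset N k T, ∀ n, |v n - u n| ≤ 2 * k * K * ε} := by
    intro b hb
    obtain ⟨v, hv, hb2⟩ := lemA k N K ε hε hε1 S T hS hT hTε b hb
    exact ⟨v, hv, hb2⟩
  have hres := upgrade N k S T K (2 * k * K * ε) base K g (fun j _ => hg j)
    (fun j hj => absurd j.isLt (by omega))
  obtain ⟨v, hv, hvb⟩ := hres
  refine ⟨v, hv, fun n => ?_⟩
  rw [huv]
  exact hvb n
end

section
/- Suppose ν : G → ℝ satisfies the k-linear forms conditions with width S. Then for any u ∈ 𝓕_S, |⟨ν − 1, u⟩| = o(1), where ⟨f,g⟩ = E_{n∈G} f(n)g(n). In particular, applying the Cauchy–Schwarz inequality k times to eliminate the functions u_i yields |⟨ν−1, u⟩|^{2^k} ≤ E_{n∈G} E_{s^{(0)}, s^{(1)} ∈ [S]^k} ∏_{ω∈{0,1}^k} (ν(n + ψ(s^{(ω)})) − 1), and the right-hand side is o(1) by the linear forms conditions. -/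
open Finset

lemma stmt16_sum_piFinset_cons {M : Type*} [AddCommMonoid M] {k : ℕ} (B : Finset ℤ)
    (g : (Fin (k+1) → ℤ) → M) :
    ∑ s ∈ Fintype.piFinset (fun _ : Fin (k+1) => B), g s
      = ∑ t ∈ B, ∑ s ∈ Fintype.piFinset (fun _ : Fin k => B), g (Fin.cons t s) := by
  rw [← Finset.sum_product']
  refine Finset.sum_nbij' (fun s => (s 0, Fin.tail s)) (fun p => Fin.cons p.1 p.2)
    ?_ ?_ ?_ ?_ ?_
  · intro s hs
    simp only [Fintype.mem_piFinset] at hs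
    simp [Finset.mem_product, Fintype.mem_piFinset, Fin.tail, hs]
  · intro p hp
    simp only [Finset.mem_product, Fintype.mem_piFinset] at hp
    simp only [Fintype.mem_piFinset]
    intro i
    refine Fin.cases ?_ ?_ i
    · simpa using hp.1
    · intro j; simpa using hp.2 j
  · intro s _; exact Fin.cons_self_tail s
  · intro p _; simp
  · intro s _; rw [Fin.cons_self_tail]

lemma stmt16_sum_piFinset_zero {M : Type*} [AddCommMonoid M] (B : Finset ℤ)
    (g : (Fin 0 → ℤ) → M) :
    ∑ s ∈ Fintype.piFinset (fun _ : Fin 0 => B), g s = g (fun i => i.elim0) := by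
  have : Fintype.piFinset (fun _ : Fin 0 => B) = {fun i => i.elim0} := by
    ext s
    simp only [Fintype.mem_piFinset, Finset.mem_singleton]
    constructor
    · intro _; funext i; exact i.elim0
    · intro _ i; exact i.elim0
  rw [this, Finset.sum_singleton]

lemma stmt16_prod_boolfun_zero {M : Type*} [CommMonoid M] (F : (Fin 0 → Bool) → M) :
    ∏ ω : Fin 0 → Bool, F ω = F (fun i => i.elim0) := by
  rw [show (Finset.univ : Finset (Fin 0 → Bool)) = {fun i => i.elim0} from by
    ext ω; constructor
    · intro _; simp only [Finset.mem_singleton]; funext i; exact i.elim0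
    · intro _; exact Finset.mem_univ _]
  rw [Finset.prod_singleton]

lemma stmt16_prod_boolfun_cons {M : Type*} [CommMonoid M] {k : ℕ} (H : (Fin (k+1) → Bool) → M) :
    ∏ ω : Fin (k+1) → Bool, H ω
      = (∏ ω : Fin k → Bool, H (Fin.cons true ω)) * ∏ ω : Fin k → Bool, H (Fin.cons false ω) := by
  calc ∏ ω : Fin (k+1) → Bool, H ω
      = ∏ p : Bool × (Fin k → Bool), H (Fin.cons p.1 p.2) :=
        (Fintype.prod_equiv (Fin.consEquiv fun _ => Bool) _ _ (fun p => rfl)).symm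
    _ = ∏ b : Bool, ∏ ω : Fin k → Bool, H (Fin.cons b ω) := Fintype.prod_prod_type _
    _ = _ := by rw [Fintype.prod_bool]

lemma stmt16_gcs (k : ℕ) : ∀ {α : Type} (A : Finset α) (B : Finset ℤ)
    (f : α → (Fin k → ℤ) → ℝ) (w : Fin k → α → (Fin k → ℤ) → ℝ),
    (∀ i a s, |w i a s| ≤ 1) →
    (∀ i a s s', (∀ j, j ≠ i → s j = s' j) → w i a s = w i a s') →
    (∑ a ∈ A, ∑ s ∈ Fintype.piFinset (fun _ : Fin k => B), f a s * ∏ i, w i a s) ^ (2^k)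
        * ((A.card : ℝ) * (B.card : ℝ) ^ (2*k))
      ≤ ((A.card : ℝ) * (B.card : ℝ) ^ k) ^ (2^k) *
        ∑ a ∈ A, ∑ s0 ∈ Fintype.piFinset (fun _ : Fin k => B),
          ∑ s1 ∈ Fintype.piFinset (fun _ : Fin k => B),
            ∏ ω : Fin k → Bool, f a (fun j => if ω j then s1 j else s0 j) := by
  induction k with
  | zero =>
    intro α A B f w hw1 hw2
    simp only [pow_zero, pow_one, Nat.mul_zero]
    simp_rw [stmt16_sum_piFinset_zero]
    have hL : ∀ a ∈ A,
        (f a fun i : Fin 0 => i.elim0) * ∏ i : Fin 0, w i a (fun i => i.elim0)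
          = f a (fun i => i.elim0) := by
      intro a _; simp
    have hR : ∀ a ∈ A,
        (∏ ω : Fin 0 → Bool, f a fun j : Fin 0 =>
            if ω j then (fun i : Fin 0 => (i.elim0 : ℤ)) j else (fun i : Fin 0 => i.elim0) j)
          = f a (fun i => i.elim0) := by
      intro a _
      rw [stmt16_prod_boolfun_zero]
      congr 1
      funext j; exact j.elim0
    rw [Finset.sum_congr rfl hL, Finset.sum_congr rfl hR, mul_comm]
  | succ k ih =>
    intro α A B f w hw1 hw2
    set P := Fintype.piFinset (fun _ : Fin k => B) with hP
    set Q := Fintype.piFinset (fun _ : Fin (k+1) => B) with hQ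
    set Ac := (A.card : ℝ) with hAc
    set Bc := (B.card : ℝ) with hBc
    have hAc0 : 0 ≤ Ac := by positivity
    have hBc0 : 0 ≤ Bc := by positivity
    -- pieces
    set g : (α × (Fin k → ℤ)) → ℤ → ℝ := fun p t =>
      f p.1 (Fin.cons t p.2) * ∏ i : Fin k, w i.succ p.1 (Fin.cons t p.2) with hg
    set W0 : (α × (Fin k → ℤ)) → ℝ := fun p => w 0 p.1 (Fin.cons 0 p.2) with hW0
    have hcons0 : ∀ (a : α) (t : ℤ) (s : Fin k → ℤ),
        w 0 a (Fin.cons t s) = W0 (a, s) := by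
      intro a t s
      apply hw2
      intro j hj
      rcases Fin.eq_zero_or_eq_succ j with h | ⟨j', rfl⟩
      · exact absurd h hj
      · simp [Fin.cons_succ]
    have L_eq : (∑ a ∈ A, ∑ s ∈ Q, f a s * ∏ i, w i a s)
        = ∑ p ∈ A ×ˢ P, W0 p * ∑ t ∈ B, g p t := by
      rw [Finset.sum_product]
      refine Finset.sum_congr rfl fun a _ => ?_
      rw [hQ, stmt16_sum_piFinset_cons, Finset.sum_comm]
      refine Finset.sum_congr rfl fun s _ => ?_
      rw [Finset.mul_sum]
      refine Finset.sum_congr rfl fun t _ => ?_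
      rw [Fin.prod_univ_succ, hcons0, hg]
      dsimp only
      ring
    set T := ∑ p ∈ A ×ˢ P, (∑ t ∈ B, g p t)^2 with hT
    have hT0 : 0 ≤ T := Finset.sum_nonneg fun p _ => sq_nonneg _
    set C1 := Ac * Bc ^ k with hC1
    have hC10 : 0 ≤ C1 := mul_nonneg hAc0 (pow_nonneg hBc0 _)
    have hPcard : (P.card : ℝ) = Bc ^ k := by
      rw [hP, Fintype.card_piFinset]
      push_cast
      rw [Finset.prod_const, Finset.card_univ, Fintype.card_fin]
    have hCS : (∑ p ∈ A ×ˢ P, W0 p * ∑ t ∈ B, g p t)^2 ≤ C1 * T := by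
      calc (∑ p ∈ A ×ˢ P, W0 p * ∑ t ∈ B, g p t)^2
          ≤ (∑ p ∈ A ×ˢ P, W0 p ^ 2) * T := Finset.sum_mul_sq_le_sq_mul_sq _ _ _
        _ ≤ C1 * T := by
            refine mul_le_mul_of_nonneg_right ?_ hT0
            calc ∑ p ∈ A ×ˢ P, W0 p ^ 2
                ≤ ∑ p ∈ A ×ˢ P, 1 := by
                  refine Finset.sum_le_sum fun p _ => ?_
                  have h1 := hw1 0 p.1 (Fin.cons 0 p.2)
                  calc W0 p ^ 2 = |W0 p| ^ 2 := (sq_abs _).symm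
                    _ ≤ 1 := pow_le_one₀ (abs_nonneg _) h1
              _ = ((A ×ˢ P).card : ℝ) := by rw [Finset.sum_const]; simp
              _ = C1 := by rw [Finset.card_product]; push_cast; rw [hPcard, hC1]
    -- new data for IH
    set F : (α × ℤ × ℤ) → (Fin k → ℤ) → ℝ := fun x s =>
      f x.1 (Fin.cons x.2.1 s) * f x.1 (Fin.cons x.2.2 s) with hF
    set W : Fin k → (α × ℤ × ℤ) → (Fin k → ℤ) → ℝ := fun i x s =>
      w i.succ x.1 (Fin.cons x.2.1 s) * w i.succ x.1 (Fin.cons x.2.2 s) with hW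
    have hW1 : ∀ i x s, |W i x s| ≤ 1 := by
      intro i x s
      rw [hW]
      dsimp only
      rw [abs_mul]
      exact mul_le_one₀ (hw1 _ _ _) (abs_nonneg _) (hw1 _ _ _)
    have hW2 : ∀ i x s s', (∀ j, j ≠ i → s j = s' j) → W i x s = W i x s' := by
      intro i x s s' h
      have hc : ∀ t : ℤ, ∀ j : Fin (k+1), j ≠ i.succ →
          (Fin.cons t s : Fin (k+1) → ℤ) j = (Fin.cons t s' : Fin (k+1) → ℤ) j := by
        intro t j hj
        rcases Fin.eq_zero_or_eq_succ j with rfl | ⟨j', rfl⟩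
        · simp
        · have : j' ≠ i := fun hji => hj (by rw [hji])
          simp [Fin.cons_succ, h j' this]
      rw [hW]
      dsimp only
      rw [hw2 i.succ x.1 _ _ (hc x.2.1), hw2 i.succ x.1 _ _ (hc x.2.2)]
    have T_eq : T = ∑ x ∈ A ×ˢ (B ×ˢ B), ∑ s ∈ P, F x s * ∏ i, W i x s := by
      rw [hT, Finset.sum_product, Finset.sum_product]
      refine Finset.sum_congr rfl fun a _ => ?_
      calc ∑ s ∈ P, (∑ t ∈ B, g (a, s) t)^2
          = ∑ s ∈ P, ∑ t0 ∈ B, ∑ t1 ∈ B, g (a,s) t0 * g (a,s) t1 := by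
            refine Finset.sum_congr rfl fun s _ => ?_
            rw [sq, Finset.sum_mul_sum]
        _ = ∑ t0 ∈ B, ∑ s ∈ P, ∑ t1 ∈ B, g (a,s) t0 * g (a,s) t1 := Finset.sum_comm
        _ = ∑ t0 ∈ B, ∑ t1 ∈ B, ∑ s ∈ P, g (a,s) t0 * g (a,s) t1 := by
            exact Finset.sum_congr rfl fun t0 _ => Finset.sum_comm
        _ = ∑ q ∈ B ×ˢ B, ∑ s ∈ P, F (a, q) s * ∏ i, W i (a, q) s := by
            rw [Finset.sum_product]
            refine Finset.sum_congr rfl fun t0 _ => Finset.sum_congr rfl fun t1 _ =>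
              Finset.sum_congr rfl fun s _ => ?_
            rw [hg, hF, hW]
            dsimp only
            rw [Finset.prod_mul_distrib]
            ring
    have hIH := ih (A ×ˢ (B ×ˢ B)) B F W hW1 hW2
    rw [← T_eq] at hIH
    have hA'card : (((A ×ˢ (B ×ˢ B)).card : ℝ)) = Ac * Bc^2 := by
      rw [Finset.card_product, Finset.card_product]
      push_cast
      ring
    rw [hA'card] at hIH
    -- relate R' to R
    have R_eq : (∑ x ∈ A ×ˢ (B ×ˢ B), ∑ s0 ∈ P, ∑ s1 ∈ P,
          ∏ ω : Fin k → Bool, F x (fun j => if ω j then s1 j else s0 j))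
        = ∑ a ∈ A, ∑ s0 ∈ Q, ∑ s1 ∈ Q,
            ∏ ω : Fin (k+1) → Bool, f a (fun j => if ω j then s1 j else s0 j) := by
      rw [Finset.sum_product]
      refine Finset.sum_congr rfl fun a _ => ?_
      rw [Finset.sum_product]
      calc ∑ t0 ∈ B, ∑ t1 ∈ B, ∑ s0 ∈ P, ∑ s1 ∈ P,
            ∏ ω : Fin k → Bool, F (a, t0, t1) (fun j => if ω j then s1 j else s0 j)
          = ∑ t0 ∈ B, ∑ s0 ∈ P, ∑ t1 ∈ B, ∑ s1 ∈ P,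
            ∏ ω : Fin k → Bool, F (a, t0, t1) (fun j => if ω j then s1 j else s0 j) := by
            exact Finset.sum_congr rfl fun t0 _ => Finset.sum_comm
        _ = ∑ s0 ∈ Q, ∑ s1 ∈ Q,
            ∏ ω : Fin (k+1) → Bool, f a (fun j => if ω j then s1 j else s0 j) := by
            rw [hQ, stmt16_sum_piFinset_cons]
            refine Finset.sum_congr rfl fun t0 _ => Finset.sum_congr rfl fun s0 _ => ?_
            rw [stmt16_sum_piFinset_cons]
            refine Finset.sum_congr rfl fun t1 _ => Finset.sum_congr rfl fun s1 _ => ?_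
            rw [stmt16_prod_boolfun_cons]
            have htrue : ∀ ω : Fin k → Bool,
                (fun j : Fin (k+1) => if (Fin.cons true ω : Fin (k+1) → Bool) j
                    then (Fin.cons t1 s1 : Fin (k+1) → ℤ) j
                    else (Fin.cons t0 s0 : Fin (k+1) → ℤ) j)
                  = (Fin.cons t1 (fun j' => if ω j' then s1 j' else s0 j') : Fin (k+1) → ℤ) := by
              intro ω; funext j
              rcases Fin.eq_zero_or_eq_succ j with rfl | ⟨j', rfl⟩
              · simp
              · simp [Fin.cons_succ]
            have hfalse : ∀ ω : Fin k → Bool,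
                (fun j : Fin (k+1) => if (Fin.cons false ω : Fin (k+1) → Bool) j
                    then (Fin.cons t1 s1 : Fin (k+1) → ℤ) j
                    else (Fin.cons t0 s0 : Fin (k+1) → ℤ) j)
                  = (Fin.cons t0 (fun j' => if ω j' then s1 j' else s0 j') : Fin (k+1) → ℤ) := by
              intro ω; funext j
              rcases Fin.eq_zero_or_eq_succ j with rfl | ⟨j', rfl⟩
              · simp
              · simp [Fin.cons_succ]
            simp_rw [htrue, hfalse]
            rw [← Finset.prod_mul_distrib]
            refine Finset.prod_congr rfl fun ω _ => ?_
            rw [hF]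
            dsimp only
            ring
    -- assemble
    have h2exp : (2:ℕ)^(k+1) = 2 * 2^k := by rw [pow_succ]; ring
    calc (∑ a ∈ A, ∑ s ∈ Q, f a s * ∏ i, w i a s) ^ (2^(k+1)) * (Ac * Bc ^ (2*(k+1)))
        = ((∑ a ∈ A, ∑ s ∈ Q, f a s * ∏ i, w i a s)^2) ^ (2^k) * (Ac * Bc ^ (2*(k+1))) := by
          rw [h2exp, pow_mul]
      _ ≤ (C1 * T) ^ (2^k) * (Ac * Bc ^ (2*(k+1))) := by
          refine mul_le_mul_of_nonneg_right (pow_le_pow_left₀ (sq_nonneg _) ?_ _) (mul_nonneg hAc0 (pow_nonneg hBc0 _))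
          rw [L_eq]; exact hCS
      _ = C1 ^ (2^k) * (T ^ (2^k) * ((Ac * Bc^2) * Bc ^ (2*k))) := by
          rw [mul_pow]
          ring
      _ ≤ C1 ^ (2^k) * (((Ac * Bc^2) * Bc ^ k) ^ (2^k) *
            ∑ x ∈ A ×ˢ (B ×ˢ B), ∑ s0 ∈ P, ∑ s1 ∈ P,
              ∏ ω : Fin k → Bool, F x (fun j => if ω j then s1 j else s0 j)) := by
          exact mul_le_mul_of_nonneg_left hIH (pow_nonneg hC10 _)
      _ = (Ac * Bc ^ (k+1)) ^ (2^(k+1)) *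
            ∑ a ∈ A, ∑ s0 ∈ Q, ∑ s1 ∈ Q,
              ∏ ω : Fin (k+1) → Bool, f a (fun j => if ω j then s1 j else s0 j) := by
          rw [R_eq, hC1, ← mul_assoc, ← mul_pow]
          have hbase : Ac * Bc ^ k * (Ac * Bc^2 * Bc ^ k) = (Ac * Bc ^ (k+1))^2 := by ring
          rw [hbase, h2exp, pow_mul]

/-- If ν satisfies the (second set of the) k-linear forms conditions with width S with
error δ, then for any u ∈ 𝓕_S, |⟨ν − 1, u⟩|^{2^k} ≤ 2^{2^k} δ, which is o(1); this
expresses the result of applying the Cauchy–Schwarz inequality k times: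
|⟨ν−1, u⟩|^{2^k} ≤ E_{n} E_{s⁽⁰⁾,s⁽¹⁾∈[S]^k} ∏_{ω∈{0,1}^k} (ν(n + ψ(s^{(ω)})) − 1). -/
theorem stmt16 (N : ℕ) [NeZero N] (k S : ℕ) (hk : 2 ≤ k) (hS : 2 ≤ S)
    (ν : ZMod N → ℝ) (hν : ∀ n, 0 ≤ ν n) (δ : ℝ) (hδ : 0 ≤ δ)
    (hlf : ∀ e : (Fin k → Bool) → Bool,
      |(∑ n : ZMod N, ∑ s0 ∈ sbox k S, ∑ s1 ∈ sbox k S,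
          ∏ ω : Fin k → Bool,
            (if e ω then
              ν (n + ((psiK k (fun j => if ω j then s1 j else s0 j) : ℤ) : ZMod N))
            else 1))
        / ((N : ℝ) * (S : ℝ) ^ (2 * k)) - 1| ≤ δ) :
    ∀ u ∈ FSset N k S,
      |(∑ n : ZMod N, (ν n - 1) * u n) / (N : ℝ)| ^ (2 ^ k) ≤ 2 ^ (2 ^ k) * δ := by
  classical
  have hN0 : (0:ℝ) < (N:ℝ) := by
    have := Nat.pos_of_ne_zero (NeZero.ne N)
    exact_mod_cast this
  have hS0 : (0:ℝ) < (S:ℝ) := by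
    have : 0 < S := by omega
    exact_mod_cast this
  have hk0 : k ≠ 0 := by omega
  set B := Finset.Icc (1:ℤ) (S:ℤ) with hB
  have hBcard : (B.card : ℝ) = (S:ℝ) := by
    rw [hB, Int.card_Icc]
    simp
  have hsbox : sbox k S = Fintype.piFinset (fun _ : Fin k => B) := rfl
  set D := (N : ℝ) * (S : ℝ) ^ (2 * k) with hD
  have hD0 : (0:ℝ) < D := by positivity
  set PP : Finset (Fin k → Bool) → ZMod N → (Fin k → ℤ) → (Fin k → ℤ) → ℝ :=
    fun T m s0 s1 =>
      ∏ ω : Fin k → Bool,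
        (if ω ∈ T then
          ν (m + ((psiK k (fun j => if ω j then s1 j else s0 j) : ℤ) : ZMod N))
        else 1) with hPP
  set sg : Finset (Fin k → Bool) → ℝ :=
    fun T => (-1:ℝ) ^ ((Finset.univ \ T).card) with hsg
  set R : ℝ := ∑ m : ZMod N, ∑ s0 ∈ sbox k S, ∑ s1 ∈ sbox k S,
      ∏ ω : Fin k → Bool,
        (ν (m + ((psiK k (fun j => if ω j then s1 j else s0 j) : ℤ) : ZMod N)) - 1) with hR
  -- expand R via inclusion-exclusion
  set pw := (Finset.univ : Finset (Fin k → Bool)).powerset with hpw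
  have hpwcard : (pw.card : ℝ) = 2 ^ (2^k) := by
    rw [hpw, Finset.card_powerset]
    simp
  have hRsum : R = ∑ T ∈ pw, sg T *
      ∑ m : ZMod N, ∑ s0 ∈ sbox k S, ∑ s1 ∈ sbox k S, PP T m s0 s1 := by
    have expand : ∀ (m : ZMod N) (s0 s1 : Fin k → ℤ),
        (∏ ω : Fin k → Bool,
          (ν (m + ((psiK k (fun j => if ω j then s1 j else s0 j) : ℤ) : ZMod N)) - 1))
        = ∑ T ∈ pw, PP T m s0 s1 * sg T := by
      intro m s0 s1
      have h := Finset.prod_add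
        (fun ω : Fin k → Bool =>
          ν (m + ((psiK k (fun j => if ω j then s1 j else s0 j) : ℤ) : ZMod N)))
        (fun _ => (-1:ℝ)) Finset.univ
      simp only [Finset.prod_const] at h
      calc (∏ ω : Fin k → Bool,
              (ν (m + ((psiK k (fun j => if ω j then s1 j else s0 j) : ℤ) : ZMod N)) - 1))
          = ∏ ω : Fin k → Bool,
              (ν (m + ((psiK k (fun j => if ω j then s1 j else s0 j) : ℤ) : ZMod N)) + (-1)) := by
            refine Finset.prod_congr rfl fun ω _ => ?_
            ring
        _ = ∑ T ∈ pw, (∏ ω ∈ T,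
              ν (m + ((psiK k (fun j => if ω j then s1 j else s0 j) : ℤ) : ZMod N)))
                * (-1:ℝ) ^ ((Finset.univ \ T).card) := h
        _ = ∑ T ∈ pw, PP T m s0 s1 * sg T := by
            refine Finset.sum_congr rfl fun T _ => ?_
            rw [hPP, hsg]
            dsimp only
            congr 1
            rw [Finset.prod_ite_mem Finset.univ T, Finset.univ_inter]
    rw [hR]
    simp_rw [expand]
    calc ∑ m : ZMod N, ∑ s0 ∈ sbox k S, ∑ s1 ∈ sbox k S, ∑ T ∈ pw, PP T m s0 s1 * sg T
        = ∑ m : ZMod N, ∑ s0 ∈ sbox k S, ∑ T ∈ pw, ∑ s1 ∈ sbox k S, PP T m s0 s1 * sg T :=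
          Finset.sum_congr rfl fun m _ => Finset.sum_congr rfl fun s0 _ => Finset.sum_comm
      _ = ∑ m : ZMod N, ∑ T ∈ pw, ∑ s0 ∈ sbox k S, ∑ s1 ∈ sbox k S, PP T m s0 s1 * sg T :=
          Finset.sum_congr rfl fun m _ => Finset.sum_comm
      _ = ∑ T ∈ pw, ∑ m : ZMod N, ∑ s0 ∈ sbox k S, ∑ s1 ∈ sbox k S, PP T m s0 s1 * sg T :=
          Finset.sum_comm
      _ = ∑ T ∈ pw, sg T * ∑ m : ZMod N, ∑ s0 ∈ sbox k S, ∑ s1 ∈ sbox k S, PP T m s0 s1 := by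
          refine Finset.sum_congr rfl fun T _ => ?_
          simp_rw [← Finset.sum_mul]
          rw [mul_comm]
  have hsign : ∑ T ∈ pw, sg T = 0 := by
    have h := Finset.prod_add (fun _ : (Fin k → Bool) => (1:ℝ)) (fun _ => (-1:ℝ)) Finset.univ
    simp only [Finset.prod_const, one_pow, one_mul] at h
    have hc : (Finset.univ : Finset (Fin k → Bool)).card ≠ 0 := by
      simp [Finset.card_univ]
    rw [show (1:ℝ) + (-1) = 0 by ring, zero_pow hc] at h
    rw [hpw, hsg]
    exact h.symm
  have hY : ∀ T ∈ pw,
      |(∑ m : ZMod N, ∑ s0 ∈ sbox k S, ∑ s1 ∈ sbox k S, PP T m s0 s1) / D - 1| ≤ δ := by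
    intro T _
    have h := hlf (fun ω => decide (ω ∈ T))
    simp only [decide_eq_true_eq] at h
    exact h
  have hRD : |R / D| ≤ 2 ^ (2^k) * δ := by
    rw [hRsum, Finset.sum_div]
    have heq : ∀ T ∈ pw,
        (sg T * ∑ m : ZMod N, ∑ s0 ∈ sbox k S, ∑ s1 ∈ sbox k S, PP T m s0 s1) / D
        = sg T * ((∑ m : ZMod N, ∑ s0 ∈ sbox k S, ∑ s1 ∈ sbox k S, PP T m s0 s1) / D - 1)
          + sg T := by
      intro T _
      field_simp
      ring
    rw [Finset.sum_congr rfl heq, Finset.sum_add_distrib, hsign, add_zero]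
    calc |∑ T ∈ pw, sg T *
            ((∑ m : ZMod N, ∑ s0 ∈ sbox k S, ∑ s1 ∈ sbox k S, PP T m s0 s1) / D - 1)|
        ≤ ∑ T ∈ pw, |sg T *
            ((∑ m : ZMod N, ∑ s0 ∈ sbox k S, ∑ s1 ∈ sbox k S, PP T m s0 s1) / D - 1)| :=
          Finset.abs_sum_le_sum_abs _ _
      _ ≤ ∑ T ∈ pw, δ := by
          refine Finset.sum_le_sum fun T hT => ?_
          rw [abs_mul, hsg]
          dsimp only
          rw [abs_pow, abs_neg, abs_one, one_pow, one_mul]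
          exact hY T hT
      _ = 2 ^ (2^k) * δ := by
          rw [Finset.sum_const, nsmul_eq_mul, hpwcard]
  have hRbound : R ≤ 2 ^ (2^k) * δ * D :=
    (div_le_iff₀ hD0).mp ((le_abs_self _).trans hRD)
  -- the bound for basic functions
  have key : FSbasic N k S ⊆ {u : ZMod N → ℝ |
      |(∑ n : ZMod N, (ν n - 1) * u n) / (N : ℝ)| ^ (2 ^ k) ≤ 2 ^ (2 ^ k) * δ} := by
    intro u hu
    obtain ⟨w, hw1, hw2, huf⟩ := hu
    simp only [Set.mem_setOf_eq]
    set f : ZMod N → (Fin k → ℤ) → ℝ :=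
      fun m s => ν (m + ((psiK k s : ℤ) : ZMod N)) - 1 with hf
    set w' : Fin k → ZMod N → (Fin k → ℤ) → ℝ :=
      fun i m s => w i m (fun j => ((s j : ℤ) : ZMod N)) with hw'
    have hw1' : ∀ i a s, |w' i a s| ≤ 1 := fun i a s => hw1 _ _ _
    have hw2' : ∀ i a s s', (∀ j, j ≠ i → s j = s' j) → w' i a s = w' i a s' := by
      intro i a s s' h
      exact hw2 i a _ _ (fun j hj => by rw [h j hj])
    set Sg0 : ℝ := ∑ m : ZMod N, ∑ s ∈ sbox k S, f m s * ∏ i, w' i m s with hSg0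
    have hX : ∑ n : ZMod N, (ν n - 1) * u n = Sg0 / (S:ℝ)^k := by
      simp_rw [huf, ← mul_div_assoc]
      rw [← Finset.sum_div]
      congr 1
      have shift : ∀ (s : Fin k → ℤ),
          ∑ n : ZMod N, (ν n - 1) *
            ∏ i, w i (n - ((psiK k s : ℤ) : ZMod N)) (fun j => ((s j : ℤ) : ZMod N))
          = ∑ m : ZMod N, f m s * ∏ i, w' i m s := by
        intro s
        refine (Fintype.sum_equiv (Equiv.addRight ((psiK k s : ℤ) : ZMod N))
          (fun m => f m s * ∏ i, w' i m s)
          (fun n => (ν n - 1) *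
            ∏ i, w i (n - ((psiK k s : ℤ) : ZMod N)) (fun j => ((s j : ℤ) : ZMod N)))
          (fun m => ?_)).symm
        rw [hf, hw']
        simp only [Equiv.coe_addRight, add_sub_cancel_right]
      calc ∑ n : ZMod N, (ν n - 1) * ∑ s ∈ sbox k S,
              ∏ i, w i (n - ((psiK k s : ℤ) : ZMod N)) (fun j => ((s j : ℤ) : ZMod N))
          = ∑ n : ZMod N, ∑ s ∈ sbox k S, (ν n - 1) *
              ∏ i, w i (n - ((psiK k s : ℤ) : ZMod N)) (fun j => ((s j : ℤ) : ZMod N)) := by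
            refine Finset.sum_congr rfl fun n _ => Finset.mul_sum _ _ _
        _ = ∑ s ∈ sbox k S, ∑ n : ZMod N, (ν n - 1) *
              ∏ i, w i (n - ((psiK k s : ℤ) : ZMod N)) (fun j => ((s j : ℤ) : ZMod N)) :=
            Finset.sum_comm
        _ = ∑ s ∈ sbox k S, ∑ m : ZMod N, f m s * ∏ i, w' i m s := by
            exact Finset.sum_congr rfl fun s _ => shift s
        _ = Sg0 := Finset.sum_comm
    have hcard : (((Finset.univ : Finset (ZMod N))).card : ℝ) = (N:ℝ) := by
      rw [Finset.card_univ, ZMod.card]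
    have hgcs := stmt16_gcs k (Finset.univ : Finset (ZMod N)) B f w' hw1' hw2'
    rw [hcard, hBcard, ← hsbox] at hgcs
    rw [← hSg0, ← hR] at hgcs
    -- now hgcs : Sg0 ^ (2^k) * ((N:ℝ) * S^(2k)) ≤ ((N:ℝ)*S^k)^(2^k) * R
    have hgcs2 : Sg0 ^ (2^k) * D ≤ ((N:ℝ) * (S:ℝ)^k)^(2^k) * (2 ^ (2^k) * δ * D) :=
      hgcs.trans (mul_le_mul_of_nonneg_left hRbound (by positivity))
    have hSbound : Sg0 ^ (2^k) ≤ 2 ^ (2^k) * δ * ((S:ℝ)^k * (N:ℝ))^(2^k) := by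
      have h := le_of_mul_le_mul_right
        (by calc Sg0 ^ (2^k) * D ≤ ((N:ℝ) * (S:ℝ)^k)^(2^k) * (2 ^ (2^k) * δ * D) := hgcs2
              _ = (2 ^ (2^k) * δ * ((S:ℝ)^k * (N:ℝ))^(2^k)) * D := by ring) hD0
      exact h
    rw [hX, div_div, abs_div, abs_of_pos (by positivity : (0:ℝ) < (S:ℝ)^k * (N:ℝ)), div_pow]
    rw [Even.pow_abs (Nat.even_pow.mpr ⟨even_two, hk0⟩)]
    rw [div_le_iff₀ (by positivity)]
    calc Sg0 ^ (2^k) ≤ 2 ^ (2^k) * δ * ((S:ℝ)^k * (N:ℝ))^(2^k) := hSbound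
      _ = 2 ^ (2^k) * δ * ((S:ℝ)^k * (N:ℝ))^(2^k) := rfl
  -- convexity
  have hconv : Convex ℝ {u : ZMod N → ℝ |
      |(∑ n : ZMod N, (ν n - 1) * u n) / (N : ℝ)| ^ (2 ^ k) ≤ 2 ^ (2 ^ k) * δ} := by
    intro x hx y hy a b ha hb hab
    simp only [Set.mem_setOf_eq] at hx hy ⊢
    have hL : (∑ n : ZMod N, (ν n - 1) * (a • x + b • y) n) / (N:ℝ)
        = a * ((∑ n : ZMod N, (ν n - 1) * x n) / (N:ℝ))
          + b * ((∑ n : ZMod N, (ν n - 1) * y n) / (N:ℝ)) := by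
      have hnum : ∑ n : ZMod N, (ν n - 1) * (a • x + b • y) n
          = a * ∑ n : ZMod N, (ν n - 1) * x n + b * ∑ n : ZMod N, (ν n - 1) * y n := by
        rw [Finset.mul_sum, Finset.mul_sum, ← Finset.sum_add_distrib]
        refine Finset.sum_congr rfl fun n _ => ?_
        simp only [Pi.add_apply, Pi.smul_apply, smul_eq_mul]
        ring
      rw [hnum]
      ring
    rw [hL]
    set X := (∑ n : ZMod N, (ν n - 1) * x n) / (N:ℝ) with hXd
    set Y := (∑ n : ZMod N, (ν n - 1) * y n) / (N:ℝ) with hYd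
    have hM0 : 0 ≤ max |X| |Y| := le_max_of_le_left (abs_nonneg _)
    calc |a * X + b * Y| ^ (2^k)
        ≤ (max |X| |Y|) ^ (2^k) := by
          refine pow_le_pow_left₀ (abs_nonneg _) ?_ _
          calc |a * X + b * Y| ≤ |a * X| + |b * Y| := abs_add_le _ _
            _ = a * |X| + b * |Y| := by
                rw [abs_mul, abs_mul, abs_of_nonneg ha, abs_of_nonneg hb]
            _ ≤ a * max |X| |Y| + b * max |X| |Y| := by
                gcongr
                · exact le_max_left _ _
                · exact le_max_right _ _
            _ = max |X| |Y| := by rw [← add_mul, hab, one_mul]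
      _ ≤ 2 ^ (2 ^ k) * δ := by
          rcases max_cases |X| |Y| with ⟨hm, _⟩ | ⟨hm, _⟩
          · rw [hm]; exact hx
          · rw [hm]; exact hy
  intro u hu
  exact convexHull_min key hconv hu
end
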